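/- For n ≥ 2, |Σ| ≥ 2, and any integer B, Randomized Integer-Division hashing over Z/2^L Z is not 2-universal: there exist two distinct n-grams w₁ ≠ w₂ with P(h(w₁) = h(w₂)) > 2^{-L}. In particular, it is not pairwise independent. -/

import Mathlib

/-- Uniform probability of an event over a finite sample space. -/
noncomputable def prob (Ω : Type*) (p : Ω → Prop) : ℚ :=
  (Nat.card {ω : Ω // p ω} : ℚ) / (Nat.card Ω : ℚ)

section Aux

variable {σ : Type*} [Fintype σ]

lemma aux_c_ne_zero {L : ℕ} (hL : 1 ≤ L) :
    ((2 ^ (L - 1) : ℕ) : ZMod (2 ^ L)) ≠ 0 := by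
  haveI : NeZero ((2 : ℕ) ^ L) := ⟨pow_ne_zero _ two_ne_zero⟩
  intro hzero
  rw [ZMod.natCast_eq_zero_iff] at hzero
  have hdvd := hzero
  have h1 := Nat.le_of_dvd (by positivity) hdvd
  have h2 : (2 : ℕ) ^ (L - 1) < 2 ^ L := Nat.pow_lt_pow_right one_lt_two (by omega)
  omega

lemma aux_card_lower {L : ℕ} (hL : 1 ≤ L) (a b : σ) (hab : a ≠ b)
    (q : (σ → ZMod (2 ^ L)) → Prop)
    (h0 : ∀ h, h a = h b → q h)
    (h1 : ∀ h, h a = h b + ((2 ^ (L - 1) : ℕ) : ZMod (2 ^ L)) → q h) :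
    2 * (2 ^ L) ^ (Fintype.card σ - 1) ≤ Nat.card {h // q h} := by
  classical
  set c : ZMod (2 ^ L) := ((2 ^ (L - 1) : ℕ) : ZMod (2 ^ L)) with hc
  have hcne : c ≠ 0 := aux_c_ne_zero hL
  have key : ∀ (t : Bool) (f : {x : σ // x ≠ a} → ZMod (2 ^ L)),
      q (fun x => if hx : x = a then f ⟨b, hab.symm⟩ + (if t then c else 0)
        else f ⟨x, hx⟩) := by
    intro t f
    set g : σ → ZMod (2 ^ L) := fun x => if hx : x = a then
      f ⟨b, hab.symm⟩ + (if t then c else 0) else f ⟨x, hx⟩ with hg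
    have hga : g a = f ⟨b, hab.symm⟩ + (if t then c else 0) := by
      simp only [hg, dif_pos rfl]
    have hgb : g b = f ⟨b, hab.symm⟩ := by
      simp only [hg, dif_neg hab.symm]
    cases t with
    | false => exact h0 g (by simp [hga, hgb])
    | true => exact h1 g (by simp [hga, hgb])
  let F : Bool × ({x : σ // x ≠ a} → ZMod (2 ^ L)) → {h // q h} :=
    fun p => ⟨_, key p.1 p.2⟩
  have hinj : Function.Injective F := by
    rintro ⟨t, f⟩ ⟨t', f'⟩ h
    have h' := congrArg Subtype.val h
    have hff' : f = f' := by
      funext x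
      have hx := congrFun h' x.1
      simpa only [F, dif_neg x.2, Subtype.eta] using hx
    have ha := congrFun h' a
    simp only [F, dif_pos rfl, hff'] at ha
    have hbit : (if t then c else 0) = (if t' then c else 0) := add_left_cancel ha
    have htt' : t = t' := by
      cases t <;> cases t' <;> simp at hbit <;> first
        | rfl
        | exact absurd hbit.symm hcne
        | exact absurd hbit hcne
    subst hff'; subst htt'; rfl
  have hle := Nat.card_le_card_of_injective F hinj
  have hcard : Nat.card (Bool × ({x : σ // x ≠ a} → ZMod (2 ^ L)))
      = 2 * (2 ^ L) ^ (Fintype.card σ - 1) := by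
    rw [Nat.card_prod, Nat.card_fun, Nat.card_zmod]
    have h1 : Nat.card Bool = 2 := by simp [Nat.card_eq_fintype_card]
    have h2 : Nat.card {x : σ // x ≠ a} = Fintype.card σ - 1 := by
      rw [Nat.card_eq_fintype_card]
      have := Fintype.card_subtype_compl (fun x : σ => x = a)
      simpa [Fintype.card_subtype_eq] using this
    rw [h1, h2]
  rwa [hcard] at hle

lemma aux_sum_diff {L B n : ℕ} (h : σ → ZMod (2 ^ L)) (a b : σ)
    (P : Fin n → Prop) [DecidablePred P] :
    (∑ i : Fin n, (B : ZMod (2 ^ L)) ^ (n - 1 - (i : ℕ)) * h a)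
      - (∑ i : Fin n, (B : ZMod (2 ^ L)) ^ (n - 1 - (i : ℕ)) * h (if P i then b else a))
    = (∑ i ∈ Finset.univ.filter P, (B : ZMod (2 ^ L)) ^ (n - 1 - (i : ℕ))) * (h a - h b) := by
  rw [← Finset.sum_sub_distrib, Finset.sum_mul, Finset.sum_filter]
  refine Finset.sum_congr rfl fun i _ => ?_
  by_cases hP : P i
  · simp [hP, mul_sub]
  · simp [hP]

lemma aux_exists {n L B : ℕ} (hn : 2 ≤ n) (hL : 1 ≤ L) (a b : σ) (hab : a ≠ b)
    (hσ : 2 ≤ Fintype.card σ)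
    (P : Fin n → Prop) [DecidablePred P] (hP : P ⟨n - 2, by omega⟩) (K : ℕ) (hK : 2 ∣ K)
    (hsum : (∑ i ∈ Finset.univ.filter P, (B : ZMod (2 ^ L)) ^ (n - 1 - (i : ℕ)))
      = (K : ZMod (2 ^ L))) :
    (fun _ : Fin n => a) ≠ (fun i => if P i then b else a) ∧
    (1 : ℚ) / 2 ^ L <
      prob (σ → ZMod (2 ^ L))
        (fun h₁ => (∑ i : Fin n, (B : ZMod (2 ^ L)) ^ (n - 1 - (i : ℕ)) * h₁ a)
          = ∑ i : Fin n, (B : ZMod (2 ^ L)) ^ (n - 1 - (i : ℕ)) * h₁ (if P i then b else a)) := by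
  classical
  haveI : NeZero ((2 : ℕ) ^ L) := ⟨pow_ne_zero _ two_ne_zero⟩
  constructor
  · intro heq
    have := congrFun heq ⟨n - 2, by omega⟩
    simp only [if_pos hP] at this
    exact hab this
  · set c : ZMod (2 ^ L) := ((2 ^ (L - 1) : ℕ) : ZMod (2 ^ L)) with hc
    set q : (σ → ZMod (2 ^ L)) → Prop := fun h₁ =>
      (∑ i : Fin n, (B : ZMod (2 ^ L)) ^ (n - 1 - (i : ℕ)) * h₁ a)
        = ∑ i : Fin n, (B : ZMod (2 ^ L)) ^ (n - 1 - (i : ℕ)) * h₁ (if P i then b else a)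
      with hq
    have h0 : ∀ h, h a = h b → q h := by
      intro h hhab
      rw [hq]
      apply sub_eq_zero.mp
      rw [aux_sum_diff, hhab]
      simp
    have h1 : ∀ h, h a = h b + c → q h := by
      intro h hhab
      rw [hq]
      apply sub_eq_zero.mp
      rw [aux_sum_diff, hsum]
      have hd : h a - h b = c := by rw [hhab]; ring
      rw [hd, hc, ← Nat.cast_mul, ZMod.natCast_eq_zero_iff]
      obtain ⟨k, rfl⟩ := hK
      refine ⟨k, ?_⟩
      have hLpow : (2 : ℕ) ^ L = 2 ^ (L - 1) * 2 := by
        rw [← pow_succ]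
        congr 1
        omega
      rw [hLpow]; ring
    have hcard := aux_card_lower hL a b hab q h0 h1
    have hΩ : Nat.card (σ → ZMod (2 ^ L)) = (2 ^ L) ^ (Fintype.card σ) := by
      rw [Nat.card_fun, Nat.card_zmod, Nat.card_eq_fintype_card]
    unfold prob
    rw [hΩ]
    set m := Fintype.card σ
    have hm1 : 1 ≤ m := by omega
    have hnat : ((2 : ℕ) ^ L) ^ m < Nat.card {h // q h} * 2 ^ L := by
      have h1 : 2 * (2 ^ L) ^ (m - 1) * 2 ^ L ≤ Nat.card {h // q h} * 2 ^ L :=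
        Nat.mul_le_mul_right _ hcard
      have h2 : (2 ^ L) ^ (m - 1) * 2 ^ L = (2 ^ L) ^ m := by
        rw [← pow_succ]
        congr 1
        omega
      have h3 : 0 < ((2 : ℕ) ^ L) ^ m := by positivity
      calc ((2 : ℕ) ^ L) ^ m < 2 * ((2 ^ L) ^ m) := by omega
        _ = 2 * (2 ^ L) ^ (m - 1) * 2 ^ L := by rw [mul_assoc, h2]
        _ ≤ Nat.card {h // q h} * 2 ^ L := h1
    rw [div_lt_div_iff₀ (by positivity) (by positivity), one_mul]
    exact_mod_cast hnat

end Aux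

/-- Randomized Integer-Division hashing is never 2-universal (hence not pairwise
independent) for n ≥ 2 over an alphabet with at least two symbols. -/
theorem integer_division_not_two_universal
    {σ : Type*} [Fintype σ] (n L B : ℕ) (hn : 2 ≤ n) (hL : 1 ≤ L)
    (hσ : 2 ≤ Fintype.card σ) :
    (∃ w₁ w₂ : Fin n → σ, w₁ ≠ w₂ ∧
      (1 : ℚ) / 2 ^ L <
        prob (σ → ZMod (2 ^ L))
          (fun h₁ => (∑ i : Fin n, (B : ZMod (2 ^ L)) ^ (n - 1 - (i : ℕ)) * h₁ (w₁ i))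
            = ∑ i : Fin n, (B : ZMod (2 ^ L)) ^ (n - 1 - (i : ℕ)) * h₁ (w₂ i))) ∧
    ¬ (∀ w₁ w₂ : Fin n → σ, w₁ ≠ w₂ → ∀ y y' : ZMod (2 ^ L),
        prob (σ → ZMod (2 ^ L))
          (fun h₁ => (∑ i : Fin n, (B : ZMod (2 ^ L)) ^ (n - 1 - (i : ℕ)) * h₁ (w₁ i)) = y ∧
            (∑ i : Fin n, (B : ZMod (2 ^ L)) ^ (n - 1 - (i : ℕ)) * h₁ (w₂ i)) = y')
          = 1 / 2 ^ (2 * L)) := by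
  classical
  haveI : NeZero ((2 : ℕ) ^ L) := ⟨pow_ne_zero _ two_ne_zero⟩
  obtain ⟨a, b, hab⟩ := Fintype.exists_pair_of_one_lt_card hσ
  have main : ∃ w₁ w₂ : Fin n → σ, w₁ ≠ w₂ ∧
      (1 : ℚ) / 2 ^ L <
        prob (σ → ZMod (2 ^ L))
          (fun h₁ => (∑ i : Fin n, (B : ZMod (2 ^ L)) ^ (n - 1 - (i : ℕ)) * h₁ (w₁ i))
            = ∑ i : Fin n, (B : ZMod (2 ^ L)) ^ (n - 1 - (i : ℕ)) * h₁ (w₂ i)) := by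
    rcases Nat.even_or_odd B with hB | hB
    · -- B even: words differ only at position n-2
      have hfilter : Finset.univ.filter (fun i : Fin n => (i : ℕ) = n - 2)
          = {(⟨n - 2, by omega⟩ : Fin n)} := by
        ext i
        simp [Fin.ext_iff]
      have hsum : (∑ i ∈ Finset.univ.filter (fun i : Fin n => (i : ℕ) = n - 2),
          (B : ZMod (2 ^ L)) ^ (n - 1 - (i : ℕ))) = (B : ZMod (2 ^ L)) := by
        rw [hfilter, Finset.sum_singleton]
        have he : n - 1 - (n - 2) = 1 := by omega
        rw [he, pow_one]
      obtain ⟨hne, hlt⟩ := aux_exists hn hL a b hab hσ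
        (fun i : Fin n => (i : ℕ) = n - 2) rfl B hB.two_dvd hsum
      exact ⟨_, _, hne, hlt⟩
    · -- B odd: words differ at positions n-2 and n-1
      have hfilter : Finset.univ.filter (fun i : Fin n => n - 2 ≤ (i : ℕ))
          = {(⟨n - 2, by omega⟩ : Fin n), (⟨n - 1, by omega⟩ : Fin n)} := by
        ext i
        have := i.isLt
        simp [Fin.ext_iff]
        omega
      have hsum : (∑ i ∈ Finset.univ.filter (fun i : Fin n => n - 2 ≤ (i : ℕ)),
          (B : ZMod (2 ^ L)) ^ (n - 1 - (i : ℕ))) = ((B + 1 : ℕ) : ZMod (2 ^ L)) := by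
        rw [hfilter, Finset.sum_pair (by simp [Fin.ext_iff]; omega)]
        have he1 : n - 1 - (n - 2) = 1 := by omega
        have he2 : n - 1 - (n - 1) = 0 := by omega
        rw [he1, he2, pow_one, pow_zero]
        push_cast
        ring
      obtain ⟨hne, hlt⟩ := aux_exists hn hL a b hab hσ
        (fun i : Fin n => n - 2 ≤ (i : ℕ)) (le_refl _) (B + 1)
        (by obtain ⟨k, hk⟩ := hB; exact ⟨k + 1, by omega⟩) hsum
      exact ⟨_, _, hne, hlt⟩
  obtain ⟨w₁, w₂, hne, hlt⟩ := main
  refine ⟨⟨w₁, w₂, hne, hlt⟩, ?_⟩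
  intro hPI
  set S₁ : (σ → ZMod (2 ^ L)) → ZMod (2 ^ L) := fun h₁ =>
    ∑ i : Fin n, (B : ZMod (2 ^ L)) ^ (n - 1 - (i : ℕ)) * h₁ (w₁ i) with hS₁
  set S₂ : (σ → ZMod (2 ^ L)) → ZMod (2 ^ L) := fun h₁ =>
    ∑ i : Fin n, (B : ZMod (2 ^ L)) ^ (n - 1 - (i : ℕ)) * h₁ (w₂ i) with hS₂
  have hsplit : prob (σ → ZMod (2 ^ L)) (fun h₁ => S₁ h₁ = S₂ h₁)
      = ∑ y : ZMod (2 ^ L), prob (σ → ZMod (2 ^ L)) (fun h₁ => S₁ h₁ = y ∧ S₂ h₁ = y) := by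
    unfold prob
    rw [← Finset.sum_div]
    congr 1
    rw [← Nat.cast_sum]
    congr 1
    have hfib := Finset.card_eq_sum_card_fiberwise
      (f := S₁) (s := Finset.univ.filter (fun h₁ => S₁ h₁ = S₂ h₁)) (t := Finset.univ)
      (fun x _ => Finset.mem_univ _)
    simp only [Nat.card_eq_fintype_card, Fintype.card_subtype]
    rw [hfib]
    refine Finset.sum_congr rfl fun y _ => ?_
    congr 1
    rw [Finset.filter_filter]
    apply Finset.filter_congr
    intro h₁ _
    constructor
    · rintro ⟨h1, h2⟩; exact ⟨h2, h1.symm.trans h2⟩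
    · rintro ⟨h1, h2⟩; exact ⟨h1.trans h2.symm, h1⟩
  have hval : prob (σ → ZMod (2 ^ L)) (fun h₁ => S₁ h₁ = S₂ h₁) = 1 / 2 ^ L := by
    rw [hsplit]
    have : ∀ y : ZMod (2 ^ L),
        prob (σ → ZMod (2 ^ L)) (fun h₁ => S₁ h₁ = y ∧ S₂ h₁ = y)
          = 1 / 2 ^ (2 * L) := fun y => hPI w₁ w₂ hne y y
    rw [Finset.sum_congr rfl (fun y _ => this y), Finset.sum_const, Finset.card_univ]
    have hcz : Fintype.card (ZMod (2 ^ L)) = 2 ^ L := ZMod.card _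
    rw [hcz, nsmul_eq_mul, two_mul, pow_add]
    have hpos : (0 : ℚ) < 2 ^ L := by positivity
    push_cast
    field_simp
  rw [hval] at hlt
  exact lt_irrefl _ hlt
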